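/- The optimal error under the mass constraint satisfies the closed-form expression L*_{u₀} = 1 − q + (1−u₀)(2q−1) − E|η(X) − q|, where q = Q(η, 1−u₀). -/

import Mathlib

open MeasureTheory Set

namespace LocalRanking

variable {Ω 𝒳 : Type*} [MeasurableSpace Ω] [MeasurableSpace 𝒳]

/-- The generalized-inverse `v`-quantile of a distribution `μ` on `ℝ`:
`Q(μ, v) = inf {t : F(t) ≥ v}`. -/
noncomputable def quantile (μ : Measure ℝ) (v : ℝ) : ℝ :=
  sInf {t : ℝ | v ≤ (μ (Iic t)).toReal}

/-- Classification error `P(Y ≠ g(X))` of the classifier `g = 2·1_C − 1` built from a set `C`. -/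
noncomputable def errSet (P : Measure Ω) (X : Ω → 𝒳) (Y : Ω → ℝ) (C : Set 𝒳) : ℝ :=
  (P {ω | (Y ω = 1 ∧ X ω ∉ C) ∨ (Y ω = -1 ∧ X ω ∈ C)}).toReal

/-- Closed form of the optimal error under the mass constraint:
`L*_{u₀} = 1 − q + (1−u₀)(2q−1) − E|η(X) − q|` with `q = Q(η, 1−u₀)`. -/
theorem optimal_error_closed_form
    (P : Measure Ω) [IsProbabilityMeasure P]
    (X : Ω → 𝒳) (Y : Ω → ℝ) (η : 𝒳 → ℝ)
    (hX : Measurable X) (hY : Measurable Y) (hηm : Measurable η)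
    (hYval : ∀ ω, Y ω = 1 ∨ Y ω = -1)
    (hηbd : ∀ x, η x ∈ Icc (0 : ℝ) 1)
    (hη : ∀ A : Set 𝒳, MeasurableSet A →
      (P {ω | X ω ∈ A ∧ Y ω = 1}).toReal = ∫ x in A, η x ∂(P.map X))
    (u₀ q : ℝ) (hu₀ : u₀ ∈ Ioo (0 : ℝ) 1)
    (hq : q = quantile (P.map fun ω => η (X ω)) (1 - u₀))
    (hmass_star : ((P.map X) {x | q ≤ η x}).toReal = u₀) :
    errSet P X Y {x | q ≤ η x} =
      1 - q + (1 - u₀) * (2 * q - 1) - ∫ x, |η x - q| ∂(P.map X) := by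
  clear hq hu₀
  set ν := P.map X with hν
  haveI : IsProbabilityMeasure ν := Measure.isProbabilityMeasure_map hX.aemeasurable
  set C : Set 𝒳 := {x | q ≤ η x} with hCdef
  have hC : MeasurableSet C := measurableSet_le measurable_const hηm
  have hηint : Integrable η ν := by
    refine (integrable_const (1:ℝ)).mono' hηm.aestronglyMeasurable (ae_of_all _ fun x => ?_)
    have h := hηbd x
    rw [Real.norm_eq_abs, abs_le]
    constructor <;> linarith [h.1, h.2]
  have hνC : (ν C).toReal = u₀ := hmass_star
  -- integral computation
  have habs : ∫ x, |η x - q| ∂ν =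
      ((∫ x in C, η x ∂ν) - q * u₀) + (q * (1 - u₀) - ∫ x in Cᶜ, η x ∂ν) := by
    have hint : Integrable (fun x => |η x - q|) ν := (hηint.sub (integrable_const q)).abs
    have h1 : ∫ x in C, |η x - q| ∂ν = (∫ x in C, η x ∂ν) - q * u₀ := by
      have e1 : ∫ x in C, |η x - q| ∂ν = ∫ x in C, (η x - q) ∂ν := by
        refine setIntegral_congr_fun hC fun x hx => ?_
        exact abs_of_nonneg (sub_nonneg.mpr hx)
      rw [e1, integral_sub hηint.restrict (integrable_const q), setIntegral_const, measureReal_def,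
        hνC, smul_eq_mul, mul_comm]
    have h2 : ∫ x in Cᶜ, |η x - q| ∂ν = q * (1 - u₀) - ∫ x in Cᶜ, η x ∂ν := by
      have e2 : ∫ x in Cᶜ, |η x - q| ∂ν = ∫ x in Cᶜ, (q - η x) ∂ν := by
        refine setIntegral_congr_fun hC.compl fun x hx => ?_
        rw [abs_sub_comm]
        exact abs_of_nonneg (sub_nonneg.mpr (le_of_not_ge hx))
      have hνCc : (ν Cᶜ).toReal = 1 - u₀ := by
        rw [measure_compl hC (measure_ne_top ν C), measure_univ,
          ENNReal.toReal_sub_of_le prob_le_one (by simp), ENNReal.toReal_one, hνC]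
      rw [e2, integral_sub (integrable_const q) hηint.restrict, setIntegral_const, measureReal_def,
        hνCc, smul_eq_mul, mul_comm]
    rw [← h1, ← h2, ← integral_add_compl hC hint]
  -- probability side
  have hYne : (1:ℝ) ≠ -1 := by norm_num
  have hA : (P {ω | Y ω = 1 ∧ X ω ∉ C}).toReal = ∫ x in Cᶜ, η x ∂ν := by
    have : {ω | Y ω = 1 ∧ X ω ∉ C} = {ω | X ω ∈ Cᶜ ∧ Y ω = 1} := by
      ext ω; simp [and_comm]
    rw [this, hη Cᶜ hC.compl]
  have hAm : MeasurableSet {ω | Y ω = 1 ∧ X ω ∉ C} :=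
    (hY (measurableSet_singleton 1)).inter ((hX hC).compl)
  have hBm : MeasurableSet {ω | Y ω = -1 ∧ X ω ∈ C} :=
    (hY (measurableSet_singleton (-1))).inter (hX hC)
  have hB : (P {ω | Y ω = -1 ∧ X ω ∈ C}).toReal = u₀ - ∫ x in C, η x ∂ν := by
    have hsplit : X ⁻¹' C = {ω | X ω ∈ C ∧ Y ω = 1} ∪ {ω | Y ω = -1 ∧ X ω ∈ C} := by
      ext ω
      rcases hYval ω with h | h <;> simp [h, hYne] <;> tauto
    have hdisj : Disjoint {ω | X ω ∈ C ∧ Y ω = 1} {ω | Y ω = -1 ∧ X ω ∈ C} := by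
      rw [Set.disjoint_left]
      rintro ω ⟨-, h1⟩ ⟨h2, -⟩
      rw [h1] at h2; exact hYne h2
    have hm1 : MeasurableSet {ω | X ω ∈ C ∧ Y ω = 1} :=
      (hX hC).inter (hY (measurableSet_singleton 1))
    have hmap : P (X ⁻¹' C) = ν C := (Measure.map_apply hX hC).symm
    have := measure_union (μ := P) hdisj hBm
    rw [← hsplit, hmap] at this
    have htr : (ν C).toReal =
        (P {ω | X ω ∈ C ∧ Y ω = 1}).toReal + (P {ω | Y ω = -1 ∧ X ω ∈ C}).toReal := by
      rw [this, ENNReal.toReal_add (measure_ne_top _ _) (measure_ne_top _ _)]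
    rw [hνC, hη C hC] at htr
    linarith
  have herr : errSet P X Y C =
      (P {ω | Y ω = 1 ∧ X ω ∉ C}).toReal + (P {ω | Y ω = -1 ∧ X ω ∈ C}).toReal := by
    have hu : {ω | (Y ω = 1 ∧ X ω ∉ C) ∨ (Y ω = -1 ∧ X ω ∈ C)} =
        {ω | Y ω = 1 ∧ X ω ∉ C} ∪ {ω | Y ω = -1 ∧ X ω ∈ C} := rfl
    have hdisj : Disjoint {ω | Y ω = 1 ∧ X ω ∉ C} {ω | Y ω = -1 ∧ X ω ∈ C} := by
      rw [Set.disjoint_left]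
      rintro ω ⟨h1, -⟩ ⟨h2, -⟩
      rw [h1] at h2; exact hYne h2
    rw [errSet, hu, measure_union hdisj hBm,
      ENNReal.toReal_add (measure_ne_top _ _) (measure_ne_top _ _)]
  rw [herr, hA, hB, habs]
  ring

end LocalRanking
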